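/- Let γ = 0 and d = 0, and let L > 0. Then Λ = 0 is NOT an eigenvalue of the linearisation L_pin about the unique pinned fluxon for parameters (L, 0, 0); zero is an eigenvalue of the linearisation about the stationary sine-Gordon fluxon φ₀ only in the defect-free case L = 0 (where the eigenfunction is φ₀'). -/

import Mathlib

open Real Filter Topology

/-- The piecewise-constant Josephson tunneling critical current:
`D(x) = d` for `|x| < L` and `D(x) = 1` for `|x| > L`. -/
noncomputable def Dfun (L d : ℝ) (x : ℝ) : ℝ := if |x| < L then d else 1

/-- A pinned fluxon for parameters `(L, d, γ)`. -/
def IsPinnedFluxon (L d γ : ℝ) (φ : ℝ → ℝ) : Prop :=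
  ContDiff ℝ 1 φ ∧
  (∀ x : ℝ, x ≠ -L → x ≠ L →
    ∃ φ'' : ℝ, HasDerivAt (deriv φ) φ'' x ∧
      φ'' - Dfun L d x * Real.sin (φ x) + γ = 0) ∧
  Tendsto φ atBot (𝓝 (Real.arcsin γ)) ∧
  Tendsto φ atTop (𝓝 (Real.arcsin γ + 2 * π)) ∧
  Tendsto (deriv φ) atBot (𝓝 0) ∧
  Tendsto (deriv φ) atTop (𝓝 0)

/-- `ψ` is an eigenfunction of the linearisation about `φpin` with eigenvalue `Λ`. -/
def IsEigenfun (L d γ : ℝ) (φpin : ℝ → ℝ) (Λ : ℝ) (ψ : ℝ → ℝ) : Prop :=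
  ψ ≠ 0 ∧ ContDiff ℝ 1 ψ ∧
  (∀ x : ℝ, x ≠ -L → x ≠ L →
    ∃ ψ'' : ℝ, HasDerivAt (deriv ψ) ψ'' x ∧
      ψ'' - Dfun L d x * Real.cos (φpin x) * ψ x = Λ * ψ x) ∧
  Tendsto ψ atBot (𝓝 0) ∧ Tendsto ψ atTop (𝓝 0) ∧
  Tendsto (deriv ψ) atBot (𝓝 0) ∧ Tendsto (deriv ψ) atTop (𝓝 0)

/-- `Λ` is an eigenvalue of the linearisation `L_pin` about the pinned fluxon `φpin`. -/
def IsEigenvalue (L d γ : ℝ) (φpin : ℝ → ℝ) (Λ : ℝ) : Prop :=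
  ∃ ψ : ℝ → ℝ, IsEigenfun L d γ φpin Λ ψ

/-- The stationary sine-Gordon fluxon `φ₀(ξ) = 4 arctan(e^ξ)`. -/
noncomputable def φ₀ (ξ : ℝ) : ℝ := 4 * Real.arctan (Real.exp ξ)

section auxiliary
open Set



lemma const_of_deriv_zero_Ioo {f : ℝ → ℝ} {a b : ℝ} (hab : a < b)
    (hc : Continuous f) (hd : ∀ x ∈ Ioo a b, HasDerivAt f 0 x) :
    f b = f a := by
  have step1 : ∀ x ∈ Ioo a b, ∀ y ∈ Ioo a b, x ≤ y → f y = f x := by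
    intro x hx y hy hxy
    have := constant_of_has_deriv_right_zero (f := f) (a := x) (b := y)
      hc.continuousOn
      (fun z hz => (hd z ⟨lt_of_lt_of_le hx.1 hz.1, lt_trans hz.2 hy.2⟩).hasDerivWithinAt)
    exact this y (right_mem_Icc.2 hxy)
  set c := (a + b) / 2 with hcdef
  have hcab : c ∈ Ioo a b := ⟨by simp only [hcdef]; linarith, by simp only [hcdef]; linarith⟩
  have step2 : ∀ x ∈ Ioo a b, f x = f c := by
    intro x hx
    rcases le_total x c with h | h
    · exact (step1 x hx c hcab h).symm
    · exact step1 c hcab x hx h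
  have ha : f a = f c := by
    have h1 : Tendsto f (𝓝[>] a) (𝓝 (f a)) := (hc.tendsto a).mono_left nhdsWithin_le_nhds
    have h2 : Tendsto f (𝓝[>] a) (𝓝 (f c)) := by
      apply Tendsto.congr' _ tendsto_const_nhds
      filter_upwards [Ioo_mem_nhdsGT_of_mem ⟨le_refl a, hab⟩] with x hx
      exact (step2 x hx).symm
    exact tendsto_nhds_unique h1 h2
  have hb : f b = f c := by
    have h1 : Tendsto f (𝓝[<] b) (𝓝 (f b)) := (hc.tendsto b).mono_left nhdsWithin_le_nhds
    have h2 : Tendsto f (𝓝[<] b) (𝓝 (f c)) := by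
      apply Tendsto.congr' _ tendsto_const_nhds
      filter_upwards [Ioo_mem_nhdsLT_of_mem ⟨hab, le_refl b⟩] with x hx
      exact (step2 x hx).symm
    exact tendsto_nhds_unique h1 h2
  rw [ha, hb]

/-- constancy + value from a limit at +∞ -/
lemma const_eq_limit_Ici {f : ℝ → ℝ} {a c : ℝ}
    (hc : Continuous f) (hd : ∀ x ∈ Ioi a, HasDerivAt f 0 x)
    (hlim : Tendsto f atTop (𝓝 c)) : ∀ x ∈ Ici a, f x = c := by
  have key : ∀ b, a ≤ b → f b = f a := by
    intro b hb
    rcases eq_or_lt_of_le hb with h | h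
    · rw [h]
    · exact const_of_deriv_zero_Ioo h hc (fun x hx => hd x hx.1)
  have : f a = c := by
    have h2 : Tendsto f atTop (𝓝 (f a)) := by
      apply Tendsto.congr' _ tendsto_const_nhds
      filter_upwards [eventually_ge_atTop a] with x hx
      exact (key x hx).symm
    exact tendsto_nhds_unique h2 hlim
  intro x hx; rw [key x hx, this]

lemma const_eq_limit_Iic {f : ℝ → ℝ} {a c : ℝ}
    (hc : Continuous f) (hd : ∀ x ∈ Iio a, HasDerivAt f 0 x)
    (hlim : Tendsto f atBot (𝓝 c)) : ∀ x ∈ Iic a, f x = c := by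
  have key : ∀ b, b ≤ a → f a = f b := by
    intro b hb
    rcases eq_or_lt_of_le hb with h | h
    · rw [h]
    · exact const_of_deriv_zero_Ioo h hc (fun x hx => hd x hx.2)
  have hfa : f a = c := by
    have h2 : Tendsto f atBot (𝓝 (f a)) := by
      apply Tendsto.congr' _ tendsto_const_nhds
      filter_upwards [eventually_le_atBot a] with x hx
      exact (key x hx)
    exact tendsto_nhds_unique h2 hlim
  intro x hx; rw [← key x hx, hfa]

/-- Gronwall: zero initial condition forces zero, forward version. -/
lemma gronwall_zero_Ici {f f' : ℝ → ℝ} {a K : ℝ} (hK : 0 ≤ K)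
    (hc : Continuous f) (hd : ∀ x ∈ Ioi a, HasDerivAt f (f' x) x)
    (hbound : ∀ x ∈ Ioi a, |f' x| ≤ K * |f x|) (ha : f a = 0) :
    ∀ x ∈ Ici a, f x = 0 := by
  intro x hx
  rcases eq_or_lt_of_le (mem_Ici.1 hx) with h | h
  · rw [← h, ha]
  -- for every a' ∈ Ioo a x, ‖f x‖ ≤ ‖f a'‖ * exp (K * (x - a))
  have key : ∀ a' ∈ Ioo a x, ‖f x‖ ≤ ‖f a'‖ * Real.exp (K * (x - a)) := by
    intro a' ha'
    have := norm_le_gronwallBound_of_norm_deriv_right_le (f := f) (f' := f')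
      (δ := ‖f a'‖) (K := K) (ε := 0) (a := a') (b := x)
      hc.continuousOn
      (fun t ht => (hd t (lt_of_lt_of_le ha'.1 ht.1)).hasDerivWithinAt)
      le_rfl
      (fun t ht => by
        rw [Real.norm_eq_abs, Real.norm_eq_abs]
        have := hbound t (lt_of_lt_of_le ha'.1 ht.1)
        linarith)
      x (right_mem_Icc.2 ha'.2.le)
    rw [gronwallBound_ε0] at this
    refine this.trans ?_
    apply mul_le_mul_of_nonneg_left _ (norm_nonneg _)
    exact Real.exp_le_exp.2 (by nlinarith [ha'.1])
  have hlim : Tendsto (fun a' => ‖f a'‖ * Real.exp (K * (x - a))) (𝓝[>] a)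
      (𝓝 (‖f a‖ * Real.exp (K * (x - a)))) := by
    exact (((hc.norm).tendsto a).mono_left nhdsWithin_le_nhds).mul_const _
  rw [ha] at hlim; simp only [norm_zero, zero_mul] at hlim
  have : ‖f x‖ ≤ 0 := by
    refine ge_of_tendsto hlim ?_
    filter_upwards [Ioo_mem_nhdsGT_of_mem ⟨le_refl a, h⟩] with a' ha'
    exact key a' ha'
  simpa using le_antisymm this (norm_nonneg _)

lemma gronwall_zero_Iic {f f' : ℝ → ℝ} {a K : ℝ} (hK : 0 ≤ K)
    (hc : Continuous f) (hd : ∀ x ∈ Iio a, HasDerivAt f (f' x) x)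
    (hbound : ∀ x ∈ Iio a, |f' x| ≤ K * |f x|) (ha : f a = 0) :
    ∀ x ∈ Iic a, f x = 0 := by
  have := gronwall_zero_Ici (f := fun t => f (2 * a - t)) (f' := fun t => -f' (2 * a - t))
    (a := a) (K := K) hK
    (hc.comp (by continuity))
    (fun t ht => by
      have h1 : (2 : ℝ) * a - t ∈ Iio a := by simp only [mem_Iio]; simp only [mem_Ioi] at ht; linarith
      have h2 := (hd _ h1).comp t ((hasDerivAt_id t).const_sub (2 * a))
      simpa [Function.comp_def] using h2.congr_deriv (by ring))
    (fun t ht => by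
      have h1 : (2 : ℝ) * a - t ∈ Iio a := by simp only [mem_Iio]; simp only [mem_Ioi] at ht; linarith
      simpa using hbound _ h1)
    (by show f (2 * a - a) = 0; rw [show (2:ℝ) * a - a = a by ring]; exact ha)
  intro x hx
  have h1 : (2 : ℝ) * a - x ∈ Ici a := by simp only [mem_Ici]; simp only [mem_Iic] at hx; linarith
  have h2 := this _ h1
  rw [show (2:ℝ) * a - (2 * a - x) = x by ring] at h2
  exact h2

lemma gronwall_zero_Icc {f f' : ℝ → ℝ} {a b K : ℝ} (hK : 0 ≤ K) (hab : a ≤ b)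
    (hc : Continuous f) (hd : ∀ x ∈ Ioo a b, HasDerivAt f (f' x) x)
    (hbound : ∀ x ∈ Ioo a b, |f' x| ≤ K * |f x|) (ha : f a = 0) :
    f b = 0 := by
  rcases eq_or_lt_of_le hab with h | h
  · rw [← h, ha]
  have key : ∀ a' ∈ Ioo a b, ‖f b‖ ≤ ‖f a'‖ * Real.exp (K * (b - a)) := by
    intro a' ha'
    have := norm_le_gronwallBound_of_norm_deriv_right_le (f := f) (f' := f')
      (δ := ‖f a'‖) (K := K) (ε := 0) (a := a') (b := b)
      hc.continuousOn
      (fun t ht => (hd t ⟨lt_of_lt_of_le ha'.1 ht.1, ht.2⟩).hasDerivWithinAt)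
      le_rfl
      (fun t ht => by
        rw [Real.norm_eq_abs, Real.norm_eq_abs]
        have := hbound t ⟨lt_of_lt_of_le ha'.1 ht.1, ht.2⟩
        linarith)
      b (right_mem_Icc.2 ha'.2.le)
    rw [gronwallBound_ε0] at this
    refine this.trans ?_
    apply mul_le_mul_of_nonneg_left _ (norm_nonneg _)
    exact Real.exp_le_exp.2 (by nlinarith [ha'.1])
  have hlim : Tendsto (fun a' => ‖f a'‖ * Real.exp (K * (b - a))) (𝓝[>] a)
      (𝓝 (‖f a‖ * Real.exp (K * (b - a)))) :=
    (((hc.norm).tendsto a).mono_left nhdsWithin_le_nhds).mul_const _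
  rw [ha] at hlim; simp only [norm_zero, zero_mul] at hlim
  have : ‖f b‖ ≤ 0 := by
    refine ge_of_tendsto hlim ?_
    filter_upwards [Ioo_mem_nhdsGT_of_mem ⟨le_refl a, h⟩] with a' ha'
    exact key a' ha'
  simpa using le_antisymm this (norm_nonneg _)

lemma gronwall_zero_Icc' {f f' : ℝ → ℝ} {a b K : ℝ} (hK : 0 ≤ K) (hab : a ≤ b)
    (hc : Continuous f) (hd : ∀ x ∈ Ioo a b, HasDerivAt f (f' x) x)
    (hbound : ∀ x ∈ Ioo a b, |f' x| ≤ K * |f x|) (hb : f b = 0) :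
    f a = 0 := by
  have refl_mem : ∀ t ∈ Ioo a b, a + b - t ∈ Ioo a b := by
    intro t ht; exact ⟨by linarith [ht.2], by linarith [ht.1]⟩
  have := gronwall_zero_Icc (f := fun t => f (a + b - t)) (f' := fun t => -f' (a + b - t))
    (a := a) (b := b) (K := K) hK hab
    (hc.comp (by continuity))
    (fun t ht => by
      have h2 := (hd _ (refl_mem t ht)).comp t ((hasDerivAt_id t).const_sub (a + b))
      simpa [Function.comp_def] using h2.congr_deriv (by ring))
    (fun t ht => by simpa using hbound _ (refl_mem t ht))
    (by show f (a + b - a) = 0; rw [show a + b - a = b by ring]; exact hb)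
  rw [show a + b - b = a by ring] at this
  exact this

lemma const_on_Icc {f : ℝ → ℝ} {a b : ℝ} (hab : a < b)
    (hc : Continuous f) (hd : ∀ x ∈ Ioo a b, HasDerivAt f 0 x) :
    ∀ x ∈ Icc a b, f x = f b := by
  intro x hx
  rcases eq_or_lt_of_le hx.2 with h | h
  · rw [h]
  · exact (const_of_deriv_zero_Ioo h hc
      (fun y hy => hd y ⟨lt_of_le_of_lt hx.1 hy.1, hy.2⟩)).symm


set_option maxHeartbeats 2000000 in
lemma part1 {L : ℝ} (hL : 0 < L) {φ : ℝ → ℝ} (hφ : IsPinnedFluxon L 0 0 φ) :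
    ¬ IsEigenvalue L 0 0 φ 0 := by
  obtain ⟨hφC, hφode, hφbot, hφtop, hφ'bot, hφ'top⟩ := hφ
  rw [Real.arcsin_zero] at hφbot hφtop
  rw [zero_add] at hφtop
  rintro ⟨ψ, hψ0, hψC, hψode, hψbot, hψtop, hψ'bot, hψ'top⟩
  -- basic differentiability
  have hφd : ∀ x, HasDerivAt φ (deriv φ x) x :=
    fun x => (hφC.differentiable one_ne_zero x).hasDerivAt
  have hψd : ∀ x, HasDerivAt ψ (deriv ψ x) x :=
    fun x => (hψC.differentiable one_ne_zero x).hasDerivAt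
  have hφc : Continuous φ := hφC.continuous
  have hψc : Continuous ψ := hψC.continuous
  have hφ'c : Continuous (deriv φ) := hφC.continuous_deriv le_rfl
  have hψ'c : Continuous (deriv ψ) := hψC.continuous_deriv le_rfl
  -- Dfun values
  have hDin : ∀ x ∈ Ioo (-L) L, Dfun L 0 x = 0 := by
    intro x hx
    unfold Dfun
    rw [if_pos (abs_lt.2 ⟨hx.1, hx.2⟩)]
  have hDout : ∀ x : ℝ, L ≤ |x| → Dfun L 0 x = 1 := by
    intro x hx
    unfold Dfun
    rw [if_neg (not_lt.2 hx)]
  -- ODE inside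
  have hφin : ∀ x ∈ Ioo (-L) L, HasDerivAt (deriv φ) 0 x := by
    intro x hx
    obtain ⟨c, hc, he⟩ := hφode x (ne_of_gt hx.1) (ne_of_lt hx.2)
    rw [hDin x hx] at he
    have : c = 0 := by linarith [he]
    rwa [this] at hc
  have hψin : ∀ x ∈ Ioo (-L) L, HasDerivAt (deriv ψ) 0 x := by
    intro x hx
    obtain ⟨c, hc, he⟩ := hψode x (ne_of_gt hx.1) (ne_of_lt hx.2)
    rw [hDin x hx] at he
    simp only [zero_mul] at he
    have : c = 0 := by linarith [he]
    rwa [this] at hc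
  -- ODE outside right
  have memR : ∀ x ∈ Ioi L, (x ≠ -L ∧ x ≠ L ∧ L ≤ |x|) := by
    intro x hx
    have hx' : L < x := hx
    refine ⟨by intro h; rw [h] at hx'; linarith, ne_of_gt hx', ?_⟩
    rw [abs_of_pos (by linarith)]; linarith
  have memL : ∀ x ∈ Iio (-L), (x ≠ -L ∧ x ≠ L ∧ L ≤ |x|) := by
    intro x hx
    have hx' : x < -L := hx
    refine ⟨ne_of_lt hx', by intro h; rw [h] at hx'; linarith, ?_⟩
    rw [abs_of_neg (by linarith)]; linarith
  have hφout : ∀ x : ℝ, L ≤ |x| → x ≠ -L → x ≠ L →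
      HasDerivAt (deriv φ) (Real.sin (φ x)) x := by
    intro x hx h1 h2
    obtain ⟨c, hc, he⟩ := hφode x h1 h2
    rw [hDout x hx] at he
    have : c = Real.sin (φ x) := by linarith [he]
    rwa [this] at hc
  have hψout : ∀ x : ℝ, L ≤ |x| → x ≠ -L → x ≠ L →
      HasDerivAt (deriv ψ) (Real.cos (φ x) * ψ x) x := by
    intro x hx h1 h2
    obtain ⟨c, hc, he⟩ := hψode x h1 h2
    rw [hDout x hx] at he
    simp only [zero_mul, one_mul] at he
    have : c = Real.cos (φ x) * ψ x := by linarith [he]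
    rwa [this] at hc
  -- constancy of derivatives in the middle
  have hLL : -L < L := by linarith
  set p := deriv φ L with hpdef
  set aa := deriv ψ L with haadef
  have hp : ∀ x ∈ Icc (-L) L, deriv φ x = p := const_on_Icc hLL hφ'c hφin
  have ha : ∀ x ∈ Icc (-L) L, deriv ψ x = aa := const_on_Icc hLL hψ'c hψin
  -- linearity in the middle
  have hφlin : φ L - φ (-L) = 2 * p * L := by
    have h := const_of_deriv_zero_Ioo hLL (hφc.sub (continuous_const.mul continuous_id))
      (fun x hx => by
        have := (hφd x).sub ((hasDerivAt_id x).const_mul p)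
        have hx' : deriv φ x = p := hp x ⟨hx.1.le, hx.2.le⟩
        exact this.congr_deriv (by rw [hx']; ring))
    simp only [Pi.sub_apply, Pi.mul_apply, id_eq] at h
    linarith [h]
  have hψlin : ψ L - ψ (-L) = 2 * aa * L := by
    have h := const_of_deriv_zero_Ioo hLL (hψc.sub (continuous_const.mul continuous_id))
      (fun x hx => by
        have := (hψd x).sub ((hasDerivAt_id x).const_mul aa)
        have hx' : deriv ψ x = aa := ha x ⟨hx.1.le, hx.2.le⟩
        exact this.congr_deriv (by rw [hx']; ring))
    simp only [Pi.sub_apply, Pi.mul_apply, id_eq] at h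
    linarith [h]
  -- energy function
  set E : ℝ → ℝ := fun x => (deriv φ x)^2 + 2 * Real.cos (φ x) with hEdef
  have hEc : Continuous E := (hφ'c.pow 2).add (continuous_const.mul (Real.continuous_cos.comp hφc))
  have hEd : ∀ x : ℝ, L ≤ |x| → x ≠ -L → x ≠ L → HasDerivAt E 0 x := by
    intro x h1 h2 h3
    have ha1 := (hφout x h1 h2 h3).pow 2
    have ha2 := ((Real.hasDerivAt_cos (φ x)).comp x (hφd x)).const_mul 2
    exact (ha1.add ha2).congr_deriv (by ring)
  have hEtop : Tendsto E atTop (𝓝 2) := by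
    have h1 : Tendsto (fun x => (deriv φ x)^2) atTop (𝓝 (0^2)) := hφ'top.pow 2
    have h2 : Tendsto (fun x => 2 * Real.cos (φ x)) atTop (𝓝 (2 * Real.cos (2*π))) :=
      ((Real.continuous_cos.tendsto (2*π)).comp hφtop).const_mul 2
    have := h1.add h2
    rw [Real.cos_two_pi] at this
    norm_num at this
    exact this
  have hEbot : Tendsto E atBot (𝓝 2) := by
    have h1 : Tendsto (fun x => (deriv φ x)^2) atBot (𝓝 (0^2)) := hφ'bot.pow 2
    have h2 : Tendsto (fun x => 2 * Real.cos (φ x)) atBot (𝓝 (2 * Real.cos 0)) :=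
      ((Real.continuous_cos.tendsto 0).comp hφbot).const_mul 2
    have := h1.add h2
    rw [Real.cos_zero] at this
    norm_num at this
    exact this
  have hER : ∀ x ∈ Ici L, E x = 2 :=
    const_eq_limit_Ici hEc (fun x hx => hEd x (memR x hx).2.2 (memR x hx).1 (memR x hx).2.1) hEtop
  have hEL : ∀ x ∈ Iic (-L), E x = 2 :=
    const_eq_limit_Iic hEc (fun x hx => hEd x (memL x hx).2.2 (memL x hx).1 (memL x hx).2.1) hEbot
  have hdφmL : deriv φ (-L) = p := hp (-L) ⟨le_rfl, by linarith⟩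
  have hdψmL : deriv ψ (-L) = aa := ha (-L) ⟨le_rfl, by linarith⟩
  have hEθp : p^2 + 2 * Real.cos (φ L) = 2 := by
    have := hER L self_mem_Ici
    simpa [hEdef, hpdef] using this
  have hEθm : p^2 + 2 * Real.cos (φ (-L)) = 2 := by
    have := hEL (-L) self_mem_Iic
    simp only [hEdef] at this
    rw [hdφmL] at this
    exact this
  -- Wronskian
  set W : ℝ → ℝ := fun x => deriv ψ x * deriv φ x - ψ x * Real.sin (φ x) with hWdef
  have hWc : Continuous W := (hψ'c.mul hφ'c).sub (hψc.mul (Real.continuous_sin.comp hφc))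
  have hWd : ∀ x : ℝ, L ≤ |x| → x ≠ -L → x ≠ L → HasDerivAt W 0 x := by
    intro x h1 h2 h3
    have ha1 := (hψout x h1 h2 h3).mul (hφout x h1 h2 h3)
    have ha2 := (hψd x).mul ((Real.hasDerivAt_sin (φ x)).comp x (hφd x))
    exact (ha1.sub ha2).congr_deriv (by simp only [Function.comp_apply]; ring)
  have hWtop : Tendsto W atTop (𝓝 0) := by
    have h2 : Tendsto (fun x => Real.sin (φ x)) atTop (𝓝 (Real.sin (2*π))) :=
      (Real.continuous_sin.tendsto (2*π)).comp hφtop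
    rw [Real.sin_two_pi] at h2
    have := (hψ'top.mul hφ'top).sub (hψtop.mul h2)
    norm_num at this
    exact this
  have hWbot : Tendsto W atBot (𝓝 0) := by
    have h2 : Tendsto (fun x => Real.sin (φ x)) atBot (𝓝 (Real.sin 0)) :=
      (Real.continuous_sin.tendsto 0).comp hφbot
    rw [Real.sin_zero] at h2
    have := (hψ'bot.mul hφ'bot).sub (hψbot.mul h2)
    norm_num at this
    exact this
  have hWR : ∀ x ∈ Ici L, W x = 0 :=
    const_eq_limit_Ici hWc (fun x hx => hWd x (memR x hx).2.2 (memR x hx).1 (memR x hx).2.1) hWtop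
  have hWL : ∀ x ∈ Iic (-L), W x = 0 :=
    const_eq_limit_Iic hWc (fun x hx => hWd x (memL x hx).2.2 (memL x hx).1 (memL x hx).2.1) hWbot
  have eq1 : aa * p - ψ L * Real.sin (φ L) = 0 := by
    have := hWR L self_mem_Ici
    simpa [hWdef, hpdef, haadef, mul_comm] using this
  have eq2 : aa * p - ψ (-L) * Real.sin (φ (-L)) = 0 := by
    have := hWL (-L) self_mem_Iic
    simp only [hWdef] at this
    rw [hdφmL, hdψmL] at this
    exact this
  -- the function h = 1 - cos φ
  set hfun : ℝ → ℝ := fun x => 1 - Real.cos (φ x) with hfundef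
  have hhc : Continuous hfun := continuous_const.sub (Real.continuous_cos.comp hφc)
  have hhd : ∀ x, HasDerivAt hfun (Real.sin (φ x) * deriv φ x) x := by
    intro x
    have := ((Real.hasDerivAt_cos (φ x)).comp x (hφd x)).const_sub 1
    exact this.congr_deriv (by ring)
  have hh0 : ∀ x, 0 ≤ hfun x := fun x => by
    simp only [hfundef, sub_nonneg]
    exact Real.cos_le_one _
  have habs : ∀ x : ℝ, E x = 2 → |Real.sin (φ x) * deriv φ x| ≤ 2 * |hfun x| := by
    intro x hEx
    simp only [hEdef] at hEx
    have h1 : (deriv φ x)^2 = 2 * hfun x := by simp only [hfundef]; linarith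
    have h2 : (Real.sin (φ x))^2 ≤ 2 * hfun x := by
      have hs := Real.sin_sq_add_cos_sq (φ x)
      have hc1 : Real.cos (φ x) ≤ 1 := Real.cos_le_one _
      have hc2 : -1 ≤ Real.cos (φ x) := Real.neg_one_le_cos _
      simp only [hfundef]
      nlinarith
    have h3 : (Real.sin (φ x) * deriv φ x)^2 ≤ (2 * hfun x)^2 := by
      nlinarith [sq_nonneg (deriv φ x), hh0 x, h1, h2]
    calc |Real.sin (φ x) * deriv φ x| = Real.sqrt ((Real.sin (φ x) * deriv φ x)^2) :=
          (Real.sqrt_sq_eq_abs _).symm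
      _ ≤ Real.sqrt ((2 * hfun x)^2) := Real.sqrt_le_sqrt h3
      _ = |2 * hfun x| := Real.sqrt_sq_eq_abs _
      _ = 2 * |hfun x| := by rw [abs_mul]; norm_num
  have hboundR : ∀ x ∈ Ici L, |Real.sin (φ x) * deriv φ x| ≤ 2 * |hfun x| :=
    fun x hx => habs x (hER x hx)
  have hboundL : ∀ x ∈ Iic (-L), |Real.sin (φ x) * deriv φ x| ≤ 2 * |hfun x| :=
    fun x hx => habs x (hEL x hx)
  rcases eq_or_ne p 0 with hp0 | hp0
  · -- case p = 0 : φ is flat at both junctions, forcing 2π = 0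
    have hcθp : Real.cos (φ L) = 1 := by rw [hp0] at hEθp; nlinarith
    have hcθm : Real.cos (φ (-L)) = 1 := by rw [hp0] at hEθm; nlinarith
    have hhL : hfun L = 0 := by simp only [hfundef, hcθp]; ring
    have hhmL : hfun (-L) = 0 := by simp only [hfundef, hcθm]; ring
    have hR0 : ∀ x ∈ Ici L, hfun x = 0 :=
      gronwall_zero_Ici (f' := fun x => Real.sin (φ x) * deriv φ x) (by norm_num) hhc
        (fun x _ => hhd x) (fun x hx => hboundR x (mem_Ici.2 (le_of_lt (mem_Ioi.1 hx)))) hhL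
    have hL0 : ∀ x ∈ Iic (-L), hfun x = 0 :=
      gronwall_zero_Iic (f' := fun x => Real.sin (φ x) * deriv φ x) (by norm_num) hhc
        (fun x _ => hhd x) (fun x hx => hboundL x (mem_Iic.2 (le_of_lt (mem_Iio.1 hx)))) hhmL
    have hdR : ∀ x ∈ Ioi L, HasDerivAt φ 0 x := by
      intro x hx
      have h1 : (deriv φ x)^2 = 2 * hfun x := by
        have := hER x (mem_Ici.2 (le_of_lt hx))
        simp only [hEdef] at this
        simp only [hfundef]
        linarith
      rw [hR0 x (mem_Ici.2 (le_of_lt hx))] at h1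
      have : deriv φ x = 0 := by nlinarith
      have h2 := hφd x
      rwa [this] at h2
    have hdL : ∀ x ∈ Iio (-L), HasDerivAt φ 0 x := by
      intro x hx
      have h1 : (deriv φ x)^2 = 2 * hfun x := by
        have := hEL x (mem_Iic.2 (le_of_lt (mem_Iio.1 hx)))
        simp only [hEdef] at this
        simp only [hfundef]
        linarith
      rw [hL0 x (mem_Iic.2 (le_of_lt (mem_Iio.1 hx)))] at h1
      have : deriv φ x = 0 := by nlinarith
      have h2 := hφd x
      rwa [this] at h2
    have h2π : φ L = 2 * π := const_eq_limit_Ici hφc hdR hφtop L self_mem_Ici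
    have h0 : φ (-L) = 0 := const_eq_limit_Iic hφc hdL hφbot (-L) self_mem_Iic
    rw [h2π, h0, hp0] at hφlin
    nlinarith [Real.pi_pos]
  · -- case p ≠ 0
    have hhLpos : 0 < hfun L := by
      have h1 : (deriv φ L)^2 = 2 * hfun L := by
        have := hER L self_mem_Ici
        simp only [hEdef] at this
        simp only [hfundef]
        linarith
      rw [← hpdef] at h1
      have := sq_nonneg p
      rcases lt_or_eq_of_le (hh0 L) with h | h
      · exact h
      · exfalso; apply hp0; nlinarith
    have hhmLpos : 0 < hfun (-L) := by
      have h1 : (deriv φ (-L))^2 = 2 * hfun (-L) := by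
        have := hEL (-L) self_mem_Iic
        simp only [hEdef] at this
        simp only [hfundef]
        linarith
      rw [hdφmL] at h1
      rcases lt_or_eq_of_le (hh0 (-L)) with h | h
      · exact h
      · exfalso; apply hp0; nlinarith
    have hposR : ∀ x ∈ Ici L, 0 < hfun x := by
      intro x hx
      rcases lt_or_eq_of_le (hh0 x) with h | h
      · exact h
      · exfalso
        have := gronwall_zero_Icc' (f' := fun x => Real.sin (φ x) * deriv φ x)
          (a := L) (b := x) (K := 2) (by norm_num) hx hhc
          (fun y _ => hhd y) (fun y hy => hboundR y (mem_Ici.2 (le_of_lt hy.1))) h.symm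
        rw [this] at hhLpos
        exact lt_irrefl 0 hhLpos
    have hposL : ∀ x ∈ Iic (-L), 0 < hfun x := by
      intro x hx
      rcases lt_or_eq_of_le (hh0 x) with h | h
      · exact h
      · exfalso
        have := gronwall_zero_Icc (f' := fun x => Real.sin (φ x) * deriv φ x)
          (a := x) (b := -L) (K := 2) (by norm_num) hx hhc
          (fun y hy => hhd y) (fun y hy => hboundL y (mem_Iic.2 (le_of_lt hy.2))) h.symm
        rw [this] at hhmLpos
        exact lt_irrefl 0 hhmLpos
    have hne0R : ∀ x ∈ Ici L, deriv φ x ≠ 0 := by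
      intro x hx h0
      have h1 : (deriv φ x)^2 = 2 * hfun x := by
        have := hER x hx
        simp only [hEdef] at this
        simp only [hfundef]
        linarith
      rw [h0] at h1
      nlinarith [hposR x hx]
    have hne0L : ∀ x ∈ Iic (-L), deriv φ x ≠ 0 := by
      intro x hx h0
      have h1 : (deriv φ x)^2 = 2 * hfun x := by
        have := hEL x hx
        simp only [hEdef] at this
        simp only [hfundef]
        linarith
      rw [h0] at h1
      nlinarith [hposL x hx]
    -- sign of deriv φ on the tails
    have hsgnR : ∀ x ∈ Ici L, 0 < p → 0 < deriv φ x := by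
      intro x hx hpp
      rcases lt_or_ge 0 (deriv φ x) with h | h
      · exact h
      · exfalso
        have hxL : L ≤ x := hx
        have hivt := intermediate_value_Icc' hxL (hφ'c.continuousOn (s := Icc L x))
        have h0mem : (0:ℝ) ∈ Icc (deriv φ x) (deriv φ L) := ⟨h, by rw [← hpdef]; linarith⟩
        obtain ⟨x₀, hx₀, hx₀0⟩ := hivt h0mem
        exact hne0R x₀ (mem_Ici.2 hx₀.1) hx₀0
    have hsgnR' : ∀ x ∈ Ici L, p < 0 → deriv φ x < 0 := by
      intro x hx hpp
      rcases lt_or_ge (deriv φ x) 0 with h | h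
      · exact h
      · exfalso
        have hxL : L ≤ x := hx
        have hivt := intermediate_value_Icc hxL (hφ'c.continuousOn (s := Icc L x))
        have h0mem : (0:ℝ) ∈ Icc (deriv φ L) (deriv φ x) := ⟨by rw [← hpdef]; linarith, h⟩
        obtain ⟨x₀, hx₀, hx₀0⟩ := hivt h0mem
        exact hne0R x₀ (mem_Ici.2 hx₀.1) hx₀0
    have hsgnL : ∀ x ∈ Iic (-L), 0 < p → 0 < deriv φ x := by
      intro x hx hpp
      rcases lt_or_ge 0 (deriv φ x) with h | h
      · exact h
      · exfalso
        have hxL : x ≤ -L := hx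
        have hivt := intermediate_value_Icc hxL (hφ'c.continuousOn (s := Icc x (-L)))
        have h0mem : (0:ℝ) ∈ Icc (deriv φ x) (deriv φ (-L)) := ⟨h, by rw [hdφmL]; linarith⟩
        obtain ⟨x₀, hx₀, hx₀0⟩ := hivt h0mem
        exact hne0L x₀ (mem_Iic.2 hx₀.2) hx₀0
    have hsgnL' : ∀ x ∈ Iic (-L), p < 0 → deriv φ x < 0 := by
      intro x hx hpp
      rcases lt_or_ge (deriv φ x) 0 with h | h
      · exact h
      · exfalso
        have hxL : x ≤ -L := hx
        have hivt := intermediate_value_Icc' hxL (hφ'c.continuousOn (s := Icc x (-L)))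
        have h0mem : (0:ℝ) ∈ Icc (deriv φ (-L)) (deriv φ x) := ⟨by rw [hdφmL]; linarith, h⟩
        obtain ⟨x₀, hx₀, hx₀0⟩ := hivt h0mem
        exact hne0L x₀ (mem_Iic.2 hx₀.2) hx₀0
    rcases hp0.lt_or_gt with hpneg | hppos
    · -- p < 0 is impossible
      have hantR : AntitoneOn φ (Ici L) := by
        apply antitoneOn_of_deriv_nonpos (convex_Ici L) hφc.continuousOn
        · intro x hx
          exact (hφC.differentiable one_ne_zero x).differentiableWithinAt
        · intro x hx
          rw [interior_Ici] at hx
          exact le_of_lt (hsgnR' x (mem_Ici.2 (le_of_lt hx)) hpneg)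
      have hantL : AntitoneOn φ (Iic (-L)) := by
        apply antitoneOn_of_deriv_nonpos (convex_Iic (-L)) hφc.continuousOn
        · intro x hx
          exact (hφC.differentiable one_ne_zero x).differentiableWithinAt
        · intro x hx
          rw [interior_Iic] at hx
          exact le_of_lt (hsgnL' x (mem_Iic.2 (le_of_lt hx)) hpneg)
      have h1 : 2 * π ≤ φ L := by
        refine le_of_tendsto hφtop ?_
        filter_upwards [eventually_ge_atTop L] with x hx
        exact hantR self_mem_Ici (mem_Ici.2 hx) hx
      have h2 : φ (-L) ≤ 0 := by
        refine ge_of_tendsto hφbot ?_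
        filter_upwards [eventually_le_atBot (-L)] with x hx
        exact hantL (mem_Iic.2 hx) self_mem_Iic hx
      nlinarith [Real.pi_pos, hφlin]
    · -- p > 0 : the main case
      have hmonR : MonotoneOn φ (Ici L) := by
        apply monotoneOn_of_deriv_nonneg (convex_Ici L) hφc.continuousOn
        · intro x hx
          exact (hφC.differentiable one_ne_zero x).differentiableWithinAt
        · intro x hx
          rw [interior_Ici] at hx
          exact le_of_lt (hsgnR x (mem_Ici.2 (le_of_lt hx)) hppos)
      have hmonL : MonotoneOn φ (Iic (-L)) := by
        apply monotoneOn_of_deriv_nonneg (convex_Iic (-L)) hφc.continuousOn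
        · intro x hx
          exact (hφC.differentiable one_ne_zero x).differentiableWithinAt
        · intro x hx
          rw [interior_Iic] at hx
          exact le_of_lt (hsgnL x (mem_Iic.2 (le_of_lt hx)) hppos)
      have hθple : φ L ≤ 2 * π := by
        refine ge_of_tendsto hφtop ?_
        filter_upwards [eventually_ge_atTop L] with x hx
        exact hmonR self_mem_Ici (mem_Ici.2 hx) hx
      have hθmge : 0 ≤ φ (-L) := by
        refine le_of_tendsto hφbot ?_
        filter_upwards [eventually_le_atBot (-L)] with x hx
        exact hmonL (mem_Iic.2 hx) self_mem_Iic hx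
      have hcθp1 : Real.cos (φ L) ≠ 1 := by
        intro h; rw [h] at hEθp; apply hp0; nlinarith
      have hcθm1 : Real.cos (φ (-L)) ≠ 1 := by
        intro h; rw [h] at hEθm; apply hp0; nlinarith
      have hθplt : φ L < 2 * π := by
        rcases lt_or_eq_of_le hθple with h | h
        · exact h
        · exact absurd (by rw [h]; exact Real.cos_two_pi) hcθp1
      have hθmgt : 0 < φ (-L) := by
        rcases lt_or_eq_of_le hθmge with h | h
        · exact h
        · exact absurd (by rw [← h]; exact Real.cos_zero) hcθm1
      have hθmlt : φ (-L) < φ L := by nlinarith [hφlin]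
      have hcoseq : Real.cos (φ L) = Real.cos (φ (-L)) := by linarith
      -- identify φ L = 2π - φ (-L)
      have key : φ L = 2 * π - φ (-L) := by
        by_cases hA : φ L ≤ π
        · exfalso
          have := Real.injOn_cos ⟨hθmge, by linarith⟩ ⟨by linarith, hA⟩ hcoseq.symm
          linarith
        · push_neg at hA
          by_cases hB : π ≤ φ (-L)
          · exfalso
            have hc1 : Real.cos (2*π - φ L) = Real.cos (φ L) := by
              rw [Real.cos_sub, Real.cos_two_pi, Real.sin_two_pi]; ring
            have hc2 : Real.cos (2*π - φ (-L)) = Real.cos (φ (-L)) := by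
              rw [Real.cos_sub, Real.cos_two_pi, Real.sin_two_pi]; ring
            have := Real.injOn_cos (show (2*π - φ L) ∈ Icc 0 π from ⟨by linarith, by linarith⟩)
              (show (2*π - φ (-L)) ∈ Icc 0 π from ⟨by linarith, by linarith⟩)
              (by rw [hc1, hc2, hcoseq])
            linarith
          · push_neg at hB
            have hc1 : Real.cos (2*π - φ L) = Real.cos (φ L) := by
              rw [Real.cos_sub, Real.cos_two_pi, Real.sin_two_pi]; ring
            have := Real.injOn_cos (show (2*π - φ L) ∈ Icc 0 π from ⟨by linarith, by linarith⟩)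
              (show (φ (-L)) ∈ Icc 0 π from ⟨by linarith, by linarith⟩)
              (by rw [hc1, hcoseq])
            linarith
      have hθmltπ : φ (-L) < π := by
        by_contra hc
        push_neg at hc
        have : π < φ L := by linarith
        linarith [key]
      have hs : 0 < Real.sin (φ (-L)) := Real.sin_pos_of_pos_of_lt_pi hθmgt hθmltπ
      have hsθp : Real.sin (φ L) = - Real.sin (φ (-L)) := by
        rw [key, Real.sin_sub, Real.sin_two_pi, Real.cos_two_pi]; ring
      -- linear algebra at the junctions
      have hsum : ψ (-L) = - ψ L := by
        have h1 : aa * p = - (ψ L * Real.sin (φ (-L))) := by rw [hsθp] at eq1; linarith [eq1]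
        have h2 : aa * p = ψ (-L) * Real.sin (φ (-L)) := by linarith [eq2]
        have h3 : (ψ (-L) + ψ L) * Real.sin (φ (-L)) = 0 := by nlinarith [h1, h2]
        rcases mul_eq_zero.1 h3 with h | h
        · linarith
        · exact absurd h (ne_of_gt hs)
      have hψLaa : ψ L = aa * L := by linarith [hψlin, hsum]
      have haa0 : aa = 0 := by
        have h1 : aa * (p + L * Real.sin (φ (-L))) = 0 := by
          have : aa * p = - (ψ L * Real.sin (φ (-L))) := by
            rw [hsθp] at eq1
            linarith [eq1]
          rw [hψLaa] at this
          nlinarith [this]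
        rcases mul_eq_zero.1 h1 with h | h
        · exact h
        · exfalso; nlinarith [hs, hppos, hL]
      have hψL0 : ψ L = 0 := by rw [hψLaa, haa0]; ring
      have hψmL0 : ψ (-L) = 0 := by rw [hsum, hψL0]; ring
      -- ψ vanishes identically, contradiction
      have hmid0 : ∀ x ∈ Icc (-L) L, ψ x = 0 := by
        intro x hx
        have hcon := const_on_Icc hLL hψc (fun y hy => by
          have h := hψd y
          rw [ha y ⟨hy.1.le, hy.2.le⟩, haa0] at h
          exact h) x hx
        rw [hcon, hψL0]
      set r : ℝ → ℝ := fun x => (ψ x)^2 + (deriv ψ x)^2 with hrdef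
      have hrc : Continuous r := (hψc.pow 2).add (hψ'c.pow 2)
      have hrd : ∀ x : ℝ, L ≤ |x| → x ≠ -L → x ≠ L →
          HasDerivAt r (2 * ψ x * deriv ψ x + 2 * deriv ψ x * (Real.cos (φ x) * ψ x)) x := by
        intro x h1 h2 h3
        have ha1 := (hψd x).pow 2
        have ha2 := (hψout x h1 h2 h3).pow 2
        exact (ha1.add ha2).congr_deriv (by ring)
      have hrbound : ∀ x : ℝ,
          |2 * ψ x * deriv ψ x + 2 * deriv ψ x * (Real.cos (φ x) * ψ x)| ≤ 2 * |r x| := by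
        intro x
        have h0 : (0:ℝ) ≤ r x := by simp only [hrdef]; positivity
        rw [abs_of_nonneg h0]
        simp only [hrdef]
        have hc1 : Real.cos (φ x) ≤ 1 := Real.cos_le_one _
        have hc2 : -1 ≤ Real.cos (φ x) := Real.neg_one_le_cos _
        rw [abs_le]
        constructor
        · nlinarith [mul_nonneg (by linarith : (0:ℝ) ≤ 1 + Real.cos (φ x))
              (sq_nonneg (ψ x + deriv ψ x)),
            mul_nonneg (by linarith : (0:ℝ) ≤ 1 + Real.cos (φ x))
              (sq_nonneg (ψ x - deriv ψ x)),
            sq_nonneg (ψ x + deriv ψ x), sq_nonneg (ψ x - deriv ψ x)]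
        · nlinarith [mul_nonneg (by linarith : (0:ℝ) ≤ 1 + Real.cos (φ x))
              (sq_nonneg (ψ x + deriv ψ x)),
            mul_nonneg (by linarith : (0:ℝ) ≤ 1 + Real.cos (φ x))
              (sq_nonneg (ψ x - deriv ψ x)),
            sq_nonneg (ψ x + deriv ψ x), sq_nonneg (ψ x - deriv ψ x)]
      have hrL0 : r L = 0 := by
        simp only [hrdef]
        rw [hψL0, ← haadef, haa0]
        norm_num
      have hrmL0 : r (-L) = 0 := by
        simp only [hrdef]
        rw [hψmL0, hdψmL, haa0]
        norm_num
      have hrR : ∀ x ∈ Ici L, r x = 0 :=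
        gronwall_zero_Ici
          (f' := fun x => 2 * ψ x * deriv ψ x + 2 * deriv ψ x * (Real.cos (φ x) * ψ x))
          (by norm_num) hrc
          (fun x hx => hrd x (memR x hx).2.2 (memR x hx).1 (memR x hx).2.1)
          (fun x _ => hrbound x) hrL0
      have hrLs : ∀ x ∈ Iic (-L), r x = 0 :=
        gronwall_zero_Iic
          (f' := fun x => 2 * ψ x * deriv ψ x + 2 * deriv ψ x * (Real.cos (φ x) * ψ x))
          (by norm_num) hrc
          (fun x hx => hrd x (memL x hx).2.2 (memL x hx).1 (memL x hx).2.1)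
          (fun x _ => hrbound x) hrmL0
      apply hψ0
      funext x
      show ψ x = 0
      rcases le_total x (-L) with h | h
      · have hx := hrLs x h
        simp only [hrdef] at hx
        have h1 : (ψ x)^2 = 0 := by nlinarith [sq_nonneg (ψ x), sq_nonneg (deriv ψ x)]
        exact pow_eq_zero_iff (by norm_num) |>.1 h1
      · rcases le_total x L with h2 | h2
        · exact hmid0 x ⟨h, h2⟩
        · have hx := hrR x h2
          simp only [hrdef] at hx
          have h1 : (ψ x)^2 = 0 := by nlinarith [sq_nonneg (ψ x), sq_nonneg (deriv ψ x)]
          exact pow_eq_zero_iff (by norm_num) |>.1 h1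






lemma Dfun00 (x : ℝ) : (if |x| < (0:ℝ) then (0:ℝ) else 1) = 1 := by
  rw [if_neg (not_lt.2 (abs_nonneg x))]

lemma hasDerivAt_φ₀ (x : ℝ) :
    HasDerivAt (fun ξ => 4 * Real.arctan (Real.exp ξ)) (4 * Real.exp x / (1 + Real.exp x ^ 2)) x := by
  have h1 := (Real.hasDerivAt_arctan (Real.exp x)).comp x (Real.hasDerivAt_exp x)
  have h2 := h1.const_mul 4
  refine h2.congr_deriv ?_
  field_simp

lemma deriv_φ₀_eq : deriv (fun ξ => 4 * Real.arctan (Real.exp ξ)) =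
    fun x => 4 * Real.exp x / (1 + Real.exp x ^ 2) :=
  funext fun x => (hasDerivAt_φ₀ x).deriv

lemma hasDerivAt_ψ (x : ℝ) :
    HasDerivAt (fun x => 4 * Real.exp x / (1 + Real.exp x ^ 2))
      ((4 * Real.exp x - 4 * Real.exp x ^ 3) / (1 + Real.exp x ^ 2) ^ 2) x := by
  have hden : (1 : ℝ) + Real.exp x ^ 2 ≠ 0 := by positivity
  have h1 : HasDerivAt (fun x => 4 * Real.exp x) (4 * Real.exp x) x :=
    (Real.hasDerivAt_exp x).const_mul 4 |>.congr_deriv (by ring)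
  have h2 : HasDerivAt (fun x => 1 + Real.exp x ^ 2) (2 * Real.exp x ^ 2) x := by
    have := ((Real.hasDerivAt_exp x).pow 2).const_add 1
    refine this.congr_deriv ?_
    ring
  have := h1.div h2 hden
  refine this.congr_deriv ?_
  field_simp
  ring

lemma deriv_ψ_eq : deriv (fun x => 4 * Real.exp x / (1 + Real.exp x ^ 2)) =
    fun x => (4 * Real.exp x - 4 * Real.exp x ^ 3) / (1 + Real.exp x ^ 2) ^ 2 :=
  funext fun x => (hasDerivAt_ψ x).deriv

lemma hasDerivAt_ψ' (x : ℝ) :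
    HasDerivAt (fun x => (4 * Real.exp x - 4 * Real.exp x ^ 3) / (1 + Real.exp x ^ 2) ^ 2)
      ((4 * Real.exp x - 24 * Real.exp x ^ 3 + 4 * Real.exp x ^ 5) / (1 + Real.exp x ^ 2) ^ 3) x := by
  have hden : ((1 : ℝ) + Real.exp x ^ 2) ^ 2 ≠ 0 := by positivity
  have h1 : HasDerivAt (fun x => 4 * Real.exp x - 4 * Real.exp x ^ 3)
      (4 * Real.exp x - 12 * Real.exp x ^ 3) x := by
    have := ((Real.hasDerivAt_exp x).const_mul 4).sub (((Real.hasDerivAt_exp x).pow 3).const_mul 4)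
    refine this.congr_deriv ?_
    ring
  have h2 : HasDerivAt (fun x => (1 + Real.exp x ^ 2) ^ 2)
      (4 * Real.exp x ^ 2 * (1 + Real.exp x ^ 2)) x := by
    have hb : HasDerivAt (fun x => 1 + Real.exp x ^ 2) (2 * Real.exp x ^ 2) x := by
      have := ((Real.hasDerivAt_exp x).pow 2).const_add 1
      refine this.congr_deriv ?_
      ring
    have := hb.pow 2
    refine this.congr_deriv ?_
    ring
  have := h1.div h2 hden
  refine this.congr_deriv ?_
  have h3 : (1 : ℝ) + Real.exp x ^ 2 ≠ 0 := by positivity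
  field_simp
  ring

lemma cos_φ₀ (x : ℝ) : Real.cos (4 * Real.arctan (Real.exp x)) =
    (1 - 6 * Real.exp x ^ 2 + Real.exp x ^ 4) / (1 + Real.exp x ^ 2) ^ 2 := by
  have h3 : (1 : ℝ) + Real.exp x ^ 2 ≠ 0 := by positivity
  rw [show (4 : ℝ) * Real.arctan (Real.exp x) = 2 * (2 * Real.arctan (Real.exp x)) by ring,
    Real.cos_two_mul, Real.cos_two_mul, Real.cos_sq_arctan]
  field_simp
  ring


lemma bound_ψ (x : ℝ) : ‖4 * Real.exp x / (1 + Real.exp x ^ 2)‖ ≤ 4 * Real.exp x := by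
  rw [Real.norm_eq_abs, abs_of_nonneg (by positivity)]
  apply div_le_self (by positivity)
  nlinarith [Real.exp_pos x, sq_nonneg (Real.exp x)]

lemma bound_ψ' (x : ℝ) : ‖4 * Real.exp x / (1 + Real.exp x ^ 2)‖ ≤ 4 * Real.exp (-x) := by
  rw [Real.norm_eq_abs, abs_of_nonneg (by positivity), Real.exp_neg, div_le_iff₀ (by positivity)]
  have hi : (Real.exp x)⁻¹ * Real.exp x = 1 := inv_mul_cancel₀ (Real.exp_pos x).ne'
  nlinarith [Real.exp_pos x, inv_pos.2 (Real.exp_pos x)]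

lemma bound_dψ (x : ℝ) : ‖(4 * Real.exp x - 4 * Real.exp x ^ 3) / (1 + Real.exp x ^ 2) ^ 2‖ ≤
    ‖4 * Real.exp x / (1 + Real.exp x ^ 2)‖ := by
  rw [Real.norm_eq_abs, Real.norm_eq_abs, abs_div, abs_div, abs_of_nonneg (a := (1 + Real.exp x ^2)^2) (by positivity), abs_of_nonneg (a := (1 + Real.exp x ^2)) (by positivity)]
  rw [div_le_div_iff₀ (by positivity) (by positivity)]
  have h1 : |4 * Real.exp x - 4 * Real.exp x ^ 3| ≤ 4 * Real.exp x * (1 + Real.exp x ^ 2) := by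
    rw [abs_le]
    constructor <;> nlinarith [Real.exp_pos x, sq_nonneg (Real.exp x), sq_nonneg (1 - Real.exp x)]
  have h2 : |4 * Real.exp x| = 4 * Real.exp x := abs_of_nonneg (by positivity)
  nlinarith [Real.exp_pos x, sq_nonneg (1 + Real.exp x ^ 2), abs_nonneg (4 * Real.exp x - 4 * Real.exp x ^3)]


lemma part2 : IsEigenfun 0 0 0 φ₀ 0 (deriv φ₀) := by
  have hφ0 : φ₀ = fun ξ => 4 * Real.arctan (Real.exp ξ) := rfl
  have hφeq : deriv φ₀ = fun x => 4 * Real.exp x / (1 + Real.exp x ^ 2) := by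
    rw [hφ0]; exact deriv_φ₀_eq
  have hψeq : deriv (deriv φ₀) = fun x =>
      (4 * Real.exp x - 4 * Real.exp x ^ 3) / (1 + Real.exp x ^ 2) ^ 2 := by
    rw [hφeq]; exact deriv_ψ_eq
  refine ⟨?_, ?_, ?_, ?_, ?_, ?_, ?_⟩
  · intro h
    have := congrFun h 0
    rw [hφeq] at this
    simp only [Real.exp_zero, Pi.zero_apply] at this
    norm_num at this
  · rw [hφeq]
    exact (contDiff_const.mul Real.contDiff_exp).div
      (contDiff_const.add (Real.contDiff_exp.pow 2)) (fun x => by positivity)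
  · intro x _ _
    refine ⟨(4 * Real.exp x - 24 * Real.exp x ^ 3 + 4 * Real.exp x ^ 5) / (1 + Real.exp x ^ 2) ^ 3,
      ?_, ?_⟩
    · rw [hψeq]; exact hasDerivAt_ψ' x
    · have hD : Dfun 0 0 x = 1 := by unfold Dfun; exact Dfun00 x
      rw [hD, hφeq, hφ0]
      simp only []
      rw [cos_φ₀]
      have h3 : (1 : ℝ) + Real.exp x ^ 2 ≠ 0 := by positivity
      field_simp
      ring
  · rw [hφeq]
    apply squeeze_zero_norm bound_ψ
    have := Real.tendsto_exp_atBot.const_mul (4:ℝ)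
    simpa using this
  · rw [hφeq]
    apply squeeze_zero_norm bound_ψ'
    have := Real.tendsto_exp_neg_atTop_nhds_zero.const_mul (4:ℝ)
    simpa using this
  · rw [hψeq]
    apply squeeze_zero_norm (fun x => (bound_dψ x).trans (bound_ψ x))
    have := Real.tendsto_exp_atBot.const_mul (4:ℝ)
    simpa using this
  · rw [hψeq]
    apply squeeze_zero_norm (fun x => (bound_dψ x).trans (bound_ψ' x))
    have := Real.tendsto_exp_neg_atTop_nhds_zero.const_mul (4:ℝ)
    simpa using this

end auxiliary

/-- For `γ = 0`, `d = 0` and `L > 0`, `Λ = 0` is not an eigenvalue of the linearisation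
about any pinned fluxon for parameters `(L, 0, 0)`; zero is an eigenvalue of the
linearisation about the stationary sine-Gordon fluxon `φ₀` in the defect-free case
`L = 0`, where the eigenfunction is `φ₀'`. -/
theorem stmt8 :
    (∀ L : ℝ, 0 < L → ∀ φ : ℝ → ℝ, IsPinnedFluxon L 0 0 φ →
      ¬ IsEigenvalue L 0 0 φ 0) ∧
    IsEigenfun 0 0 0 φ₀ 0 (deriv φ₀) :=
  ⟨fun _L hL _φ hφ => part1 hL hφ, part2⟩
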